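/- Let D = 3 and fix p̃_d < p_d for d = 1,2,3 with s = p̃₁p̃₂p̃₃. Collect the columns of Z ∈ ℝ^{n×p₁p₂p₃} that correspond to tensor entries with positions (i₁,i₂,i₃), i_d ∈ {1,…,p̃_d}, into Z₁ ∈ ℝ^{n×s}, and the remaining columns into Z₂ ∈ ℝ^{n×(p₁p₂p₃−s)}. Suppose Z₁ᵀZ₁ = I_s and Z₁ᵀZ₂ = 0, and that y = Z₁ vec(G̃_b) for G̃_b = ṽ₁ ∘ w̃₂ ∘ w̃₃ + w̃₁ ∘ ṽ₂ ∘ w̃₃ + w̃₁ ∘ w̃₂ ∘ ṽ₃ ∈ ℝ^{p̃₁×p̃₂×p̃₃}, where w̃_d, ṽ_d ∈ ℝ^{p̃_d} is a linearly independent pair for each d = 1,2,3. Then the rank-constrained least-squares problem inf{F(A) : rank(A) ≤ 2} does not attain its infimum (it has no solution). -/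

import Mathlib

open scoped BigOperators
open Matrix

noncomputable section

/-- Outer product of three vectors, as an order-3 tensor. -/
def outer3 {p₁ p₂ p₃ : ℕ} (u : Fin p₁ → ℝ) (v : Fin p₂ → ℝ) (w : Fin p₃ → ℝ) :
    Fin p₁ × Fin p₂ × Fin p₃ → ℝ :=
  fun i => u i.1 * v i.2.1 * w i.2.2

/-- CP rank of an order-3 tensor: the least `R` such that the tensor is a sum of `R`
outer products. -/
def rank3 {p₁ p₂ p₃ : ℕ} (A : Fin p₁ × Fin p₂ × Fin p₃ → ℝ) : ℕ :=
  sInf {R : ℕ | ∃ (a : Fin R → Fin p₁ → ℝ) (b : Fin R → Fin p₂ → ℝ) (c : Fin R → Fin p₃ → ℝ),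
    A = fun i => ∑ r, a r i.1 * b r i.2.1 * c r i.2.2}

/-- The embedding of the "first block" index set `{1,…,q_d} ⊆ {1,…,p_d}` (d = 1,2,3). -/
def emb3 {q₁ q₂ q₃ p₁ p₂ p₃ : ℕ} (h₁ : q₁ ≤ p₁) (h₂ : q₂ ≤ p₂) (h₃ : q₃ ≤ p₃) :
    Fin q₁ × Fin q₂ × Fin q₃ → Fin p₁ × Fin p₂ × Fin p₃ :=
  fun j => (Fin.castLE h₁ j.1, Fin.castLE h₂ j.2.1, Fin.castLE h₃ j.2.2)

/-! ### Auxiliary lemmas -/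

lemma pair_combo {q : ℕ} {u v : Fin q → ℝ} (h : LinearIndependent ℝ ![u, v])
    (s t : ℝ) (hst : ∀ i, s * u i + t * v i = 0) : s = 0 ∧ t = 0 := by
  refine LinearIndependent.pair_iff.1 h s t ?_
  funext i
  simpa using hst i

lemma pair_swap {q : ℕ} {u v : Fin q → ℝ} (h : LinearIndependent ℝ ![u, v]) :
    LinearIndependent ℝ ![v, u] := by
  rw [LinearIndependent.pair_iff] at h ⊢
  intro s t hst
  have := h t s (by rw [add_comm]; exact hst)
  exact ⟨this.2, this.1⟩

lemma sum_comb {ι : Type*} [Fintype ι] (f g : ι → ℝ) (α β : ℝ) :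
    ∑ i, (α * f i + β * g i) = α * (∑ i, f i) + β * (∑ i, g i) := by
  rw [Finset.mul_sum, Finset.mul_sum, ← Finset.sum_add_distrib]

lemma sum_comb3 {ι : Type*} [Fintype ι] (f g h : ι → ℝ) (α β γ : ℝ) :
    ∑ i, (α * f i + β * g i + γ * h i)
      = α * (∑ i, f i) + β * (∑ i, g i) + γ * (∑ i, h i) := by
  rw [Finset.mul_sum, Finset.mul_sum, Finset.mul_sum, ← Finset.sum_add_distrib,
    ← Finset.sum_add_distrib]

lemma sep_aux {q : ℕ} {u v : Fin q → ℝ} (h : LinearIndependent ℝ ![u, v])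
    (A B U : ℝ) (hA : ∑ i, v i * v i = A) (hB : ∑ i, u i * v i = B)
    (hU : ∑ i, u i * u i = U) :
    ∃ φ : Fin q → ℝ, (∑ i, u i * φ i) = 1 ∧ (∑ i, v i * φ i) = 0 := by
  have hvφ : (∑ i, v i * (A * u i - B * v i)) = 0 := by
    have e1 : (∑ i, v i * (A * u i - B * v i))
        = A * (∑ i, u i * v i) + (-B) * (∑ i, v i * v i) := by
      rw [← sum_comb]; exact Finset.sum_congr rfl fun i _ => by ring
    rw [e1, hA, hB]; ring
  have huφ : (∑ i, u i * (A * u i - B * v i)) = A * U - B * B := by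
    have e1 : (∑ i, u i * (A * u i - B * v i))
        = A * (∑ i, u i * u i) + (-B) * (∑ i, u i * v i) := by
      rw [← sum_comb]; exact Finset.sum_congr rfl fun i _ => by ring
    rw [e1, hU, hB]; ring
  by_cases hg0 : A * U - B * B = 0
  · exfalso
    have hsq : (∑ i, (A * u i - B * v i) ^ 2) = 0 := by
      have e1 : (∑ i, (A * u i - B * v i) ^ 2)
          = A * (∑ i, u i * (A * u i - B * v i))
            + (-B) * (∑ i, v i * (A * u i - B * v i)) := by
        rw [← sum_comb]; exact Finset.sum_congr rfl fun i _ => by ring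
      rw [e1, huφ, hvφ, hg0]; ring
    have hzero : ∀ i, A * u i - B * v i = 0 := by
      intro i
      have h1 : ∀ j ∈ Finset.univ, (0:ℝ) ≤ (A * u j - B * v j) ^ 2 :=
        fun j _ => sq_nonneg _
      have := (Finset.sum_eq_zero_iff_of_nonneg h1).1 hsq i (Finset.mem_univ i)
      exact pow_eq_zero_iff (n := 2) (by norm_num) |>.1 this
    have hAB := pair_combo h A (-B) (fun i => by linarith [hzero i])
    have hA0 : A = 0 := hAB.1
    have hv0 : ∀ i, v i = 0 := by
      intro i
      have h1 : ∀ j ∈ Finset.univ, (0:ℝ) ≤ v j * v j := fun j _ => mul_self_nonneg _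
      have h2 : ∑ i, v i * v i = 0 := by rw [hA, hA0]
      have := (Finset.sum_eq_zero_iff_of_nonneg h1).1 h2 i (Finset.mem_univ i)
      exact mul_self_eq_zero.1 this
    have := pair_combo h 0 1 (fun i => by simp [hv0 i])
    exact one_ne_zero this.2
  · set G := A * U - B * B with hG
    refine ⟨fun i => G⁻¹ * (A * u i - B * v i), ?_, ?_⟩
    · calc (∑ i, u i * (G⁻¹ * (A * u i - B * v i)))
          = G⁻¹ * ∑ i, u i * (A * u i - B * v i) := by
            rw [Finset.mul_sum]; exact Finset.sum_congr rfl fun i _ => by ring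
        _ = 1 := by rw [huφ]; exact inv_mul_cancel₀ hg0
    · calc (∑ i, v i * (G⁻¹ * (A * u i - B * v i)))
          = G⁻¹ * ∑ i, v i * (A * u i - B * v i) := by
            rw [Finset.mul_sum]; exact Finset.sum_congr rfl fun i _ => by ring
        _ = 0 := by rw [hvφ, mul_zero]

lemma sep {q : ℕ} {u v : Fin q → ℝ} (h : LinearIndependent ℝ ![u, v]) :
    ∃ φ : Fin q → ℝ, (∑ i, u i * φ i) = 1 ∧ (∑ i, v i * φ i) = 0 :=
  sep_aux h _ _ _ rfl rfl rfl

lemma no_rank1 {q₁ q₂ : ℕ} {x₁ x₂ : Fin q₁ → ℝ} {y₁ y₂ : Fin q₂ → ℝ}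
    (hx : LinearIndependent ℝ ![x₁, x₂]) (hy : LinearIndependent ℝ ![y₁, y₂])
    (s : Fin q₁ → ℝ) (t : Fin q₂ → ℝ)
    (heq : ∀ i₁ i₂, x₁ i₁ * y₁ i₂ + x₂ i₁ * y₂ i₂ = s i₁ * t i₂) : False := by
  obtain ⟨f, hf1, hf2⟩ := sep hy
  obtain ⟨g, hg1, hg2⟩ := sep (pair_swap hy)
  have hx1 : ∀ i, x₁ i = (∑ j, t j * f j) * s i := by
    intro i
    have e1 : ∑ j, (x₁ i * y₁ j + x₂ i * y₂ j) * f j = ∑ j, (s i * t j) * f j :=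
      Finset.sum_congr rfl fun j _ => by rw [heq i j]
    have e2 : ∑ j, (x₁ i * y₁ j + x₂ i * y₂ j) * f j
        = x₁ i * (∑ j, y₁ j * f j) + x₂ i * (∑ j, y₂ j * f j) := by
      rw [← sum_comb]; exact Finset.sum_congr rfl fun j _ => by ring
    have e3 : ∑ j, (s i * t j) * f j = s i * (∑ j, t j * f j) := by
      rw [Finset.mul_sum]; exact Finset.sum_congr rfl fun j _ => by ring
    rw [e2, e3, hf1, hf2] at e1
    linarith [e1]
  have hx2 : ∀ i, x₂ i = (∑ j, t j * g j) * s i := by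
    intro i
    have e1 : ∑ j, (x₁ i * y₁ j + x₂ i * y₂ j) * g j = ∑ j, (s i * t j) * g j :=
      Finset.sum_congr rfl fun j _ => by rw [heq i j]
    have e2 : ∑ j, (x₁ i * y₁ j + x₂ i * y₂ j) * g j
        = x₁ i * (∑ j, y₁ j * g j) + x₂ i * (∑ j, y₂ j * g j) := by
      rw [← sum_comb]; exact Finset.sum_congr rfl fun j _ => by ring
    have e3 : ∑ j, (s i * t j) * g j = s i * (∑ j, t j * g j) := by
      rw [Finset.mul_sum]; exact Finset.sum_congr rfl fun j _ => by ring
    rw [e2, e3, hg2, hg1] at e1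
    linarith [e1]
  have hcomb := pair_combo hx (∑ j, t j * g j) (-(∑ j, t j * f j))
    (fun i => by rw [hx1 i, hx2 i]; ring)
  have hx10 : ∀ i, x₁ i = 0 := fun i => by
    rw [hx1 i]
    have : (∑ j, t j * f j) = 0 := by linarith [hcomb.2]
    rw [this, zero_mul]
  have := pair_combo hx 1 0 (fun i => by simp [hx10 i])
  exact one_ne_zero this.1

lemma pair_sub {q : ℕ} {u v : Fin q → ℝ} (h : LinearIndependent ℝ ![u, v]) (σ : ℝ) :
    LinearIndependent ℝ ![u, fun i => v i - σ * u i] := by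
  rw [LinearIndependent.pair_iff]
  intro s t hst
  have hc := pair_combo h (s - t * σ) t (fun i => by
    have := congrFun hst i
    simp only [Pi.add_apply, Pi.smul_apply, smul_eq_mul, Pi.zero_apply] at this
    ring_nf
    ring_nf at this
    linarith)
  obtain ⟨hc1, hc2⟩ := hc
  refine ⟨?_, hc2⟩
  rw [hc2] at hc1
  linarith [hc1]

lemma G_not_rank2 {q₁ q₂ q₃ : ℕ} {w₁ v₁ : Fin q₁ → ℝ} {w₂ v₂ : Fin q₂ → ℝ}
    {w₃ v₃ : Fin q₃ → ℝ}
    (h₁ : LinearIndependent ℝ ![w₁, v₁]) (h₂ : LinearIndependent ℝ ![w₂, v₂])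
    (h₃ : LinearIndependent ℝ ![w₃, v₃])
    (a : Fin 2 → Fin q₁ → ℝ) (b : Fin 2 → Fin q₂ → ℝ) (c : Fin 2 → Fin q₃ → ℝ)
    (heq : ∀ j : Fin q₁ × Fin q₂ × Fin q₃,
      (outer3 v₁ w₂ w₃ + outer3 w₁ v₂ w₃ + outer3 w₁ w₂ v₃) j
        = ∑ r, a r j.1 * b r j.2.1 * c r j.2.2) : False := by
  have contr : ∀ (χ : Fin q₃ → ℝ) (i₁ : Fin q₁) (i₂ : Fin q₂),
      v₁ i₁ * w₂ i₂ * (∑ i, w₃ i * χ i) + w₁ i₁ * v₂ i₂ * (∑ i, w₃ i * χ i)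
        + w₁ i₁ * w₂ i₂ * (∑ i, v₃ i * χ i)
      = a 0 i₁ * b 0 i₂ * (∑ i, c 0 i * χ i)
        + a 1 i₁ * b 1 i₂ * (∑ i, c 1 i * χ i) := by
    intro χ i₁ i₂
    have e0 : ∀ i₃ : Fin q₃,
        (v₁ i₁ * w₂ i₂ * w₃ i₃ + w₁ i₁ * v₂ i₂ * w₃ i₃ + w₁ i₁ * w₂ i₂ * v₃ i₃) * χ i₃
        = (a 0 i₁ * b 0 i₂ * c 0 i₃ + a 1 i₁ * b 1 i₂ * c 1 i₃) * χ i₃ := by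
      intro i₃
      have := heq (i₁, i₂, i₃)
      simp only [outer3, Pi.add_apply, Fin.sum_univ_two] at this
      rw [this]
    have e1 := Finset.sum_congr rfl (fun i₃ (_ : i₃ ∈ Finset.univ) => e0 i₃)
    have eL : ∑ i₃, (v₁ i₁ * w₂ i₂ * w₃ i₃ + w₁ i₁ * v₂ i₂ * w₃ i₃
          + w₁ i₁ * w₂ i₂ * v₃ i₃) * χ i₃
        = v₁ i₁ * w₂ i₂ * (∑ i, w₃ i * χ i) + w₁ i₁ * v₂ i₂ * (∑ i, w₃ i * χ i)
          + w₁ i₁ * w₂ i₂ * (∑ i, v₃ i * χ i) := by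
      rw [Finset.mul_sum, Finset.mul_sum, Finset.mul_sum, ← Finset.sum_add_distrib,
        ← Finset.sum_add_distrib]
      exact Finset.sum_congr rfl fun i _ => by ring
    have eR : ∑ i₃, (a 0 i₁ * b 0 i₂ * c 0 i₃ + a 1 i₁ * b 1 i₂ * c 1 i₃) * χ i₃
        = a 0 i₁ * b 0 i₂ * (∑ i, c 0 i * χ i) + a 1 i₁ * b 1 i₂ * (∑ i, c 1 i * χ i) := by
      rw [Finset.mul_sum, Finset.mul_sum, ← Finset.sum_add_distrib]
      exact Finset.sum_congr rfl fun i _ => by ring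
    rw [← eL, ← eR]
    exact e1
  obtain ⟨φ, hφ1, hφ2⟩ := sep h₃
  obtain ⟨ψ, hψ1, hψ2⟩ := sep (pair_swap h₃)
  have E1 : ∀ i₁ i₂, v₁ i₁ * w₂ i₂ + w₁ i₁ * v₂ i₂
      = a 0 i₁ * b 0 i₂ * (∑ i, c 0 i * φ i) + a 1 i₁ * b 1 i₂ * (∑ i, c 1 i * φ i) := by
    intro i₁ i₂
    have := contr φ i₁ i₂
    rw [hφ1, hφ2] at this
    linarith [this]
  have E0 : ∀ i₁ i₂, w₁ i₁ * w₂ i₂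
      = a 0 i₁ * b 0 i₂ * (∑ i, c 0 i * ψ i) + a 1 i₁ * b 1 i₂ * (∑ i, c 1 i * ψ i) := by
    intro i₁ i₂
    have := contr ψ i₁ i₂
    rw [hψ1, hψ2] at this
    linarith [this]
  set l0 := ∑ i, c 0 i * φ i
  set l1 := ∑ i, c 1 i * φ i
  set m0 := ∑ i, c 0 i * ψ i
  set m1 := ∑ i, c 1 i * ψ i
  by_cases hm0 : m0 = 0
  · by_cases hm1 : m1 = 0
    · have hw : ∀ i₁ i₂, w₁ i₁ * w₂ i₂ = 0 := fun i₁ i₂ => by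
        rw [E0 i₁ i₂, hm0, hm1]; ring
      have hw1 : ∃ i, w₁ i ≠ 0 := by
        by_contra hall
        push_neg at hall
        have := pair_combo h₁ 1 0 (fun i => by simp [hall i])
        exact one_ne_zero this.1
      have hw2 : ∃ i, w₂ i ≠ 0 := by
        by_contra hall
        push_neg at hall
        have := pair_combo h₂ 1 0 (fun i => by simp [hall i])
        exact one_ne_zero this.1
      obtain ⟨i₁, hi₁⟩ := hw1
      obtain ⟨i₂, hi₂⟩ := hw2
      exact (mul_ne_zero hi₁ hi₂) (hw i₁ i₂)
    · obtain ⟨σ, hσ⟩ : ∃ σ, σ * m1 = l1 := ⟨l1 / m1, div_mul_cancel₀ _ hm1⟩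
      refine no_rank1 (pair_swap h₁) (pair_sub h₂ σ)
        (fun i₁ => l0 * a 0 i₁) (b 0) (fun i₁ i₂ => ?_)
      have e1 := E1 i₁ i₂
      have e0 := E0 i₁ i₂
      show v₁ i₁ * w₂ i₂ + w₁ i₁ * (v₂ i₂ - σ * w₂ i₂) = l0 * a 0 i₁ * b 0 i₂
      linear_combination e1 - σ * e0 - (a 1 i₁ * b 1 i₂) * hσ - (σ * (a 0 i₁ * b 0 i₂)) * hm0
  · obtain ⟨σ, hσ⟩ : ∃ σ, σ * m0 = l0 := ⟨l0 / m0, div_mul_cancel₀ _ hm0⟩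
    refine no_rank1 (pair_swap h₁) (pair_sub h₂ σ)
      (fun i₁ => (l1 - σ * m1) * a 1 i₁) (b 1) (fun i₁ i₂ => ?_)
    have e1 := E1 i₁ i₂
    have e0 := E0 i₁ i₂
    show v₁ i₁ * w₂ i₂ + w₁ i₁ * (v₂ i₂ - σ * w₂ i₂) = (l1 - σ * m1) * a 1 i₁ * b 1 i₂
    linear_combination e1 - σ * e0 - (a 0 i₁ * b 0 i₂) * hσ

lemma exists_decomp {p₁ p₂ p₃ : ℕ} (A : Fin p₁ × Fin p₂ × Fin p₃ → ℝ) :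
    ∃ (R : ℕ) (a : Fin R → Fin p₁ → ℝ) (b : Fin R → Fin p₂ → ℝ) (c : Fin R → Fin p₃ → ℝ),
      A = fun i => ∑ r, a r i.1 * b r i.2.1 * c r i.2.2 := by
  refine ⟨p₁ * p₂,
    fun r i₁ => if (finProdFinEquiv.symm r).1 = i₁ then 1 else 0,
    fun r i₂ => if (finProdFinEquiv.symm r).2 = i₂ then 1 else 0,
    fun r i₃ => A ((finProdFinEquiv.symm r).1, (finProdFinEquiv.symm r).2, i₃), ?_⟩
  funext i
  obtain ⟨i₁, i₂, i₃⟩ := i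
  rw [show (Finset.univ.sum fun r : Fin (p₁ * p₂) =>
      (if (finProdFinEquiv.symm r).1 = i₁ then (1:ℝ) else 0) *
      (if (finProdFinEquiv.symm r).2 = i₂ then (1:ℝ) else 0) *
      A ((finProdFinEquiv.symm r).1, (finProdFinEquiv.symm r).2, i₃))
    = Finset.univ.sum fun x : Fin p₁ × Fin p₂ =>
      (if x.1 = i₁ then (1:ℝ) else 0) * (if x.2 = i₂ then (1:ℝ) else 0) *
      A (x.1, x.2, i₃) from ?_]
  · rw [Fintype.sum_prod_type]
    simp [Finset.sum_ite_eq, Finset.sum_ite_eq']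
  · rw [← Equiv.sum_comp finProdFinEquiv]
    simp

lemma pad_decomp {p₁ p₂ p₃ R : ℕ} (hR : R ≤ 2)
    (a : Fin R → Fin p₁ → ℝ) (b : Fin R → Fin p₂ → ℝ) (c : Fin R → Fin p₃ → ℝ) :
    ∃ (a' : Fin 2 → Fin p₁ → ℝ) (b' : Fin 2 → Fin p₂ → ℝ) (c' : Fin 2 → Fin p₃ → ℝ),
      ∀ i : Fin p₁ × Fin p₂ × Fin p₃,
        (∑ r, a r i.1 * b r i.2.1 * c r i.2.2)
          = ∑ r, a' r i.1 * b' r i.2.1 * c' r i.2.2 := by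
  refine ⟨fun r => if h' : (r : ℕ) < R then a ⟨r, h'⟩ else 0,
          fun r => if h' : (r : ℕ) < R then b ⟨r, h'⟩ else 0,
          fun r => if h' : (r : ℕ) < R then c ⟨r, h'⟩ else 0, fun i => ?_⟩
  refine Eq.symm ?_
  rw [← Finset.sum_subset (Finset.subset_univ (Finset.univ.map (Fin.castLEEmb hR)))]
  · rw [Finset.sum_map]
    refine Finset.sum_congr rfl fun r _ => ?_
    have hr : ((Fin.castLEEmb hR r : Fin 2) : ℕ) < R := r.is_lt
    beta_reduce
    rw [dif_pos hr, dif_pos hr, dif_pos hr]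
    rfl
  · intro x _ hx
    have hxR : ¬ (x : ℕ) < R := by
      intro hlt
      apply hx
      rw [Finset.mem_map]
      exact ⟨⟨(x : ℕ), hlt⟩, Finset.mem_univ _, by ext; simp⟩
    simp [hxR]

lemma rank3_le_two_decomp {p₁ p₂ p₃ : ℕ} {A : Fin p₁ × Fin p₂ × Fin p₃ → ℝ}
    (h : rank3 A ≤ 2) :
    ∃ (a : Fin 2 → Fin p₁ → ℝ) (b : Fin 2 → Fin p₂ → ℝ) (c : Fin 2 → Fin p₃ → ℝ),
      ∀ i, A i = ∑ r, a r i.1 * b r i.2.1 * c r i.2.2 := by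
  have hne : {R : ℕ | ∃ (a : Fin R → Fin p₁ → ℝ) (b : Fin R → Fin p₂ → ℝ)
      (c : Fin R → Fin p₃ → ℝ), A = fun i => ∑ r, a r i.1 * b r i.2.1 * c r i.2.2}.Nonempty := by
    obtain ⟨R, a, b, c, hd⟩ := exists_decomp A
    exact ⟨R, a, b, c, hd⟩
  obtain ⟨a, b, c, hd⟩ := Nat.sInf_mem hne
  obtain ⟨a', b', c', hpad⟩ := pad_decomp h a b c
  exact ⟨a', b', c', fun i => by rw [hd]; exact hpad i⟩

/-- Extension of a vector by zeros. -/
def extVec {q p : ℕ} (h : q ≤ p) (u : Fin q → ℝ) : Fin p → ℝ :=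
  fun i => if h' : (i : ℕ) < q then u ⟨i, h'⟩ else 0

lemma extVec_castLE {q p : ℕ} (h : q ≤ p) (u : Fin q → ℝ) (j : Fin q) :
    extVec h u (Fin.castLE h j) = u j := by
  simp [extVec]

theorem stmt3 {n q₁ q₂ q₃ p₁ p₂ p₃ : ℕ}
    (hq₁ : q₁ < p₁) (hq₂ : q₂ < p₂) (hq₃ : q₃ < p₃)
    (Z : Matrix (Fin n) (Fin p₁ × Fin p₂ × Fin p₃) ℝ)
    -- Z₁ᵀ Z₁ = I_s : the columns of Z at embedded positions are orthonormal
    (horth : ∀ j j' : Fin q₁ × Fin q₂ × Fin q₃,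
      (∑ i, Z i (emb3 hq₁.le hq₂.le hq₃.le j) * Z i (emb3 hq₁.le hq₂.le hq₃.le j'))
        = if j = j' then (1 : ℝ) else 0)
    -- Z₁ᵀ Z₂ = 0 : the embedded columns are orthogonal to all remaining columns
    (hperp : ∀ (j : Fin q₁ × Fin q₂ × Fin q₃) (k : Fin p₁ × Fin p₂ × Fin p₃),
      k ∉ Set.range (emb3 hq₁.le hq₂.le hq₃.le) →
      (∑ i, Z i (emb3 hq₁.le hq₂.le hq₃.le j) * Z i k) = 0)
    (w₁ v₁ : Fin q₁ → ℝ) (w₂ v₂ : Fin q₂ → ℝ) (w₃ v₃ : Fin q₃ → ℝ)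
    (h₁ : LinearIndependent ℝ ![w₁, v₁])
    (h₂ : LinearIndependent ℝ ![w₂, v₂])
    (h₃ : LinearIndependent ℝ ![w₃, v₃])
    (y : Fin n → ℝ)
    -- y = Z₁ vec(G̃_b)
    (hy : ∀ i, y i = ∑ j : Fin q₁ × Fin q₂ × Fin q₃,
      Z i (emb3 hq₁.le hq₂.le hq₃.le j) *
        (outer3 v₁ w₂ w₃ + outer3 w₁ v₂ w₃ + outer3 w₁ w₂ v₃) j) :
    ¬ ∃ A : Fin p₁ × Fin p₂ × Fin p₃ → ℝ, rank3 A ≤ 2 ∧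
      ∀ B : Fin p₁ × Fin p₂ × Fin p₃ → ℝ, rank3 B ≤ 2 →
        (∑ i, (y i - Z.mulVec A i) ^ 2) ≤ (∑ i, (y i - Z.mulVec B i) ^ 2) := by
  rintro ⟨A, hA2, hmin⟩
  set E := emb3 hq₁.le hq₂.le hq₃.le with hEdef
  set g := outer3 v₁ w₂ w₃ + outer3 w₁ v₂ w₃ + outer3 w₁ w₂ v₃ with hgdef
  have hEinj : Function.Injective E := by
    intro j j' hjj
    rw [hEdef] at hjj
    simp only [emb3, Prod.mk.injEq] at hjj
    have e1 := Fin.castLE_injective hq₁.le hjj.1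
    have e2 := Fin.castLE_injective hq₂.le hjj.2.1
    have e3 := Fin.castLE_injective hq₃.le hjj.2.2
    exact Prod.ext e1 (Prod.ext e2 e3)
  set s2 : Finset (Fin p₁ × Fin p₂ × Fin p₃) :=
    Finset.univ \ Finset.univ.image E with hs2def
  have hs2 : ∀ k ∈ s2, k ∉ Set.range E := by
    intro k hk hkr
    obtain ⟨j, hj⟩ := hkr
    rw [hs2def, Finset.mem_sdiff] at hk
    exact hk.2 (Finset.mem_image.mpr ⟨j, Finset.mem_univ j, hj⟩)
  -- The key decomposition of the loss function
  have key : ∀ A : Fin p₁ × Fin p₂ × Fin p₃ → ℝ,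
      (∑ i, (y i - Z.mulVec A i) ^ 2)
        = (∑ j, (g j - A (E j)) ^ 2) + ∑ i, (∑ k ∈ s2, Z i k * A k) ^ 2 := by
    intro A
    have hsplit : ∀ i, y i - Z.mulVec A i
        = (∑ j, Z i (E j) * (g j - A (E j))) - (∑ k ∈ s2, Z i k * A k) := by
      intro i
      have hmv : Z.mulVec A i = ∑ k, Z i k * A k := rfl
      have himg : (∑ k ∈ Finset.univ.image E, Z i k * A k)
          = ∑ j, Z i (E j) * A (E j) :=
        Finset.sum_image (fun j _ j' _ hjj => hEinj hjj)
      have hsum : (∑ k, Z i k * A k)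
          = (∑ j, Z i (E j) * A (E j)) + ∑ k ∈ s2, Z i k * A k := by
        rw [← himg, hs2def]
        rw [← Finset.sum_sdiff (Finset.subset_univ (Finset.univ.image E))]
        ring
      have hcsum : (∑ j, Z i (E j) * (g j - A (E j)))
          = (∑ j, Z i (E j) * g j) - ∑ j, Z i (E j) * A (E j) := by
        rw [← Finset.sum_sub_distrib]
        exact Finset.sum_congr rfl fun j _ => by ring
      rw [hy i, hmv, hsum, hcsum]
      ring
    have hexpand : (∑ i, (y i - Z.mulVec A i) ^ 2)
        = (∑ i, (∑ j, Z i (E j) * (g j - A (E j))) ^ 2)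
          + (-2) * (∑ i, (∑ j, Z i (E j) * (g j - A (E j))) * (∑ k ∈ s2, Z i k * A k))
          + ∑ i, (∑ k ∈ s2, Z i k * A k) ^ 2 := by
      calc (∑ i, (y i - Z.mulVec A i) ^ 2)
          = ∑ i, (1 * ((∑ j, Z i (E j) * (g j - A (E j))) ^ 2)
              + (-2) * ((∑ j, Z i (E j) * (g j - A (E j))) * (∑ k ∈ s2, Z i k * A k))
              + 1 * ((∑ k ∈ s2, Z i k * A k) ^ 2)) := by
            refine Finset.sum_congr rfl fun i _ => ?_
            rw [hsplit i]
            ring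
        _ = 1 * (∑ i, (∑ j, Z i (E j) * (g j - A (E j))) ^ 2)
              + (-2) * (∑ i, (∑ j, Z i (E j) * (g j - A (E j))) * (∑ k ∈ s2, Z i k * A k))
              + 1 * (∑ i, (∑ k ∈ s2, Z i k * A k) ^ 2) := sum_comb3 _ _ _ _ _ _
        _ = (∑ i, (∑ j, Z i (E j) * (g j - A (E j))) ^ 2)
              + (-2) * (∑ i, (∑ j, Z i (E j) * (g j - A (E j))) * (∑ k ∈ s2, Z i k * A k))
              + ∑ i, (∑ k ∈ s2, Z i k * A k) ^ 2 := by ring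
    have hu2 : (∑ i, (∑ j, Z i (E j) * (g j - A (E j))) ^ 2)
        = ∑ j, (g j - A (E j)) ^ 2 := by
      calc (∑ i, (∑ j, Z i (E j) * (g j - A (E j))) ^ 2)
          = ∑ i, ∑ j, ∑ j', (Z i (E j) * (g j - A (E j)))
              * (Z i (E j') * (g j' - A (E j'))) := by
            refine Finset.sum_congr rfl fun i _ => ?_
            rw [pow_two, Finset.sum_mul_sum]
        _ = ∑ j, ∑ j', ((g j - A (E j)) * (g j' - A (E j')))
              * ∑ i, Z i (E j) * Z i (E j') := by
            rw [Finset.sum_comm]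
            refine Finset.sum_congr rfl fun j _ => ?_
            rw [Finset.sum_comm]
            refine Finset.sum_congr rfl fun j' _ => ?_
            rw [Finset.mul_sum]
            exact Finset.sum_congr rfl fun i _ => by ring
        _ = ∑ j, ∑ j', ((g j - A (E j)) * (g j' - A (E j')))
              * (if j = j' then (1:ℝ) else 0) := by
            refine Finset.sum_congr rfl fun j _ => Finset.sum_congr rfl fun j' _ => ?_
            rw [horth j j']
        _ = ∑ j, (g j - A (E j)) ^ 2 := by
            refine Finset.sum_congr rfl fun j _ => ?_
            simp [mul_ite, Finset.sum_ite_eq, pow_two]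
    have hut : (∑ i, (∑ j, Z i (E j) * (g j - A (E j))) * (∑ k ∈ s2, Z i k * A k))
        = 0 := by
      calc (∑ i, (∑ j, Z i (E j) * (g j - A (E j))) * (∑ k ∈ s2, Z i k * A k))
          = ∑ i, ∑ j, ∑ k ∈ s2, (Z i (E j) * (g j - A (E j))) * (Z i k * A k) := by
            refine Finset.sum_congr rfl fun i _ => ?_
            rw [Finset.sum_mul_sum]
        _ = ∑ j, ∑ k ∈ s2, ((g j - A (E j)) * A k) * ∑ i, Z i (E j) * Z i k := by
            rw [Finset.sum_comm]
            refine Finset.sum_congr rfl fun j _ => ?_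
            rw [Finset.sum_comm]
            refine Finset.sum_congr rfl fun k _ => ?_
            rw [Finset.mul_sum]
            exact Finset.sum_congr rfl fun i _ => by ring
        _ = 0 := by
            refine Finset.sum_eq_zero fun j _ => Finset.sum_eq_zero fun k hk => ?_
            rw [hperp j k (hs2 k hk), mul_zero]
    rw [hexpand, hu2, hut]
    ring
  -- the defect tensors
  set D : Fin q₁ × Fin q₂ × Fin q₃ → ℝ := fun j =>
    w₁ j.1 * v₂ j.2.1 * v₃ j.2.2 + v₁ j.1 * v₂ j.2.1 * w₃ j.2.2
      + v₁ j.1 * w₂ j.2.1 * v₃ j.2.2 with hDdef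
  set K : Fin q₁ × Fin q₂ × Fin q₃ → ℝ := fun j =>
    v₁ j.1 * v₂ j.2.1 * v₃ j.2.2 with hKdef
  set C : ℝ := ∑ j, (|D j| + |K j|) ^ 2 with hCdef
  -- approximating sequence
  have happrox : ∀ m : ℕ, ∃ B : Fin p₁ × Fin p₂ × Fin p₃ → ℝ, rank3 B ≤ 2 ∧
      (∑ i, (y i - Z.mulVec B i) ^ 2) ≤ ((m : ℝ) + 1)⁻¹ ^ 2 * C := by
    intro m
    set t : ℝ := (m : ℝ) + 1 with htdef
    have ht1 : (1 : ℝ) ≤ t := by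
      rw [htdef]; have := Nat.cast_nonneg (α := ℝ) m; linarith
    have ht0 : t ≠ 0 := by linarith
    have htinv : (0:ℝ) ≤ t⁻¹ := inv_nonneg.mpr (by linarith)
    have htinv1 : t⁻¹ ≤ 1 := inv_le_one_of_one_le₀ ht1
    set sa : Fin 2 → Fin q₁ → ℝ := ![fun i => t * w₁ i + v₁ i, fun i => -(t * w₁ i)]
      with hsadef
    set sb : Fin 2 → Fin q₂ → ℝ := ![fun i => w₂ i + t⁻¹ * v₂ i, w₂] with hsbdef
    set sc : Fin 2 → Fin q₃ → ℝ := ![fun i => w₃ i + t⁻¹ * v₃ i, w₃] with hscdef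
    set B : Fin p₁ × Fin p₂ × Fin p₃ → ℝ := fun i =>
      ∑ r, extVec hq₁.le (sa r) i.1 * extVec hq₂.le (sb r) i.2.1
        * extVec hq₃.le (sc r) i.2.2 with hBdef
    have hBrank : rank3 B ≤ 2 :=
      Nat.sInf_le ⟨fun r => extVec hq₁.le (sa r), fun r => extVec hq₂.le (sb r),
        fun r => extVec hq₃.le (sc r), hBdef⟩
    have hBE : ∀ j : Fin q₁ × Fin q₂ × Fin q₃,
        B (E j) = ∑ r, sa r j.1 * sb r j.2.1 * sc r j.2.2 := by
      intro j
      rw [hBdef]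
      refine Finset.sum_congr rfl fun r _ => ?_
      show extVec hq₁.le (sa r) (Fin.castLE hq₁.le j.1)
          * extVec hq₂.le (sb r) (Fin.castLE hq₂.le j.2.1)
          * extVec hq₃.le (sc r) (Fin.castLE hq₃.le j.2.2) = _
      rw [extVec_castLE, extVec_castLE, extVec_castLE]
    have hB0 : ∀ k : Fin p₁ × Fin p₂ × Fin p₃, k ∉ Set.range E → B k = 0 := by
      intro k hk
      have hcond : ¬((k.1 : ℕ) < q₁ ∧ (k.2.1 : ℕ) < q₂ ∧ (k.2.2 : ℕ) < q₃) := by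
        intro ⟨ha, hb, hc⟩
        refine hk ⟨(⟨(k.1 : ℕ), ha⟩, ⟨(k.2.1 : ℕ), hb⟩, ⟨(k.2.2 : ℕ), hc⟩), ?_⟩
        rw [hEdef]
        simp only [emb3]
        exact Prod.ext (Fin.ext rfl) (Prod.ext (Fin.ext rfl) (Fin.ext rfl))
      rw [hBdef]
      refine Finset.sum_eq_zero fun r _ => ?_
      rcases not_and_or.mp hcond with h | h
      · rw [show extVec hq₁.le (sa r) k.1 = 0 from dif_neg h]; ring
      · rcases not_and_or.mp h with h' | h'
        · rw [show extVec hq₂.le (sb r) k.2.1 = 0 from dif_neg h']; ring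
        · rw [show extVec hq₃.le (sc r) k.2.2 = 0 from dif_neg h']; ring
    refine ⟨B, hBrank, ?_⟩
    rw [key B]
    have hzero2 : (∑ i, (∑ k ∈ s2, Z i k * B k) ^ 2) = 0 := by
      refine Finset.sum_eq_zero fun i _ => ?_
      have : (∑ k ∈ s2, Z i k * B k) = 0 :=
        Finset.sum_eq_zero fun k hk => by rw [hB0 k (hs2 k hk), mul_zero]
      rw [this]; ring
    rw [hzero2, add_zero]
    -- pointwise error
    have herr : ∀ j : Fin q₁ × Fin q₂ × Fin q₃,
        g j - B (E j) = -(t⁻¹ * D j + t⁻¹ * t⁻¹ * K j) := by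
      intro j
      rw [hBE j, hgdef, hDdef, hKdef]
      simp only [Pi.add_apply, outer3, Fin.sum_univ_two, hsadef, hsbdef, hscdef,
        Matrix.cons_val_zero, Matrix.cons_val_one, Matrix.head_cons]
      field_simp
      ring
    have hbound : ∀ j : Fin q₁ × Fin q₂ × Fin q₃,
        (g j - B (E j)) ^ 2 ≤ t⁻¹ ^ 2 * (|D j| + |K j|) ^ 2 := by
      intro j
      have habs : |g j - B (E j)| ≤ t⁻¹ * (|D j| + |K j|) := by
        rw [herr j, abs_neg]
        calc |t⁻¹ * D j + t⁻¹ * t⁻¹ * K j|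
            ≤ |t⁻¹ * D j| + |t⁻¹ * t⁻¹ * K j| := abs_add_le _ _
          _ = t⁻¹ * |D j| + t⁻¹ * t⁻¹ * |K j| := by
              rw [abs_mul, abs_mul, abs_mul, abs_of_nonneg htinv]
          _ ≤ t⁻¹ * |D j| + t⁻¹ * |K j| := by
              nlinarith [mul_le_mul_of_nonneg_right htinv1
                (mul_nonneg htinv (abs_nonneg (K j)))]
          _ = t⁻¹ * (|D j| + |K j|) := by ring
      calc (g j - B (E j)) ^ 2 = |g j - B (E j)| ^ 2 := (sq_abs _).symm
        _ ≤ (t⁻¹ * (|D j| + |K j|)) ^ 2 := pow_le_pow_left₀ (abs_nonneg _) habs 2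
        _ = t⁻¹ ^ 2 * (|D j| + |K j|) ^ 2 := by ring
    calc (∑ j, (g j - B (E j)) ^ 2)
        ≤ ∑ j, t⁻¹ ^ 2 * (|D j| + |K j|) ^ 2 :=
          Finset.sum_le_sum fun j _ => hbound j
      _ = t⁻¹ ^ 2 * C := by rw [hCdef, ← Finset.mul_sum]
  -- minimality forces the loss of A to be 0
  set L : ℝ := ∑ i, (y i - Z.mulVec A i) ^ 2 with hLdef
  have hL0 : (0:ℝ) ≤ L := Finset.sum_nonneg fun i _ => sq_nonneg _
  have hLle : ∀ m : ℕ, L ≤ ((m : ℝ) + 1)⁻¹ ^ 2 * C := by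
    intro m
    obtain ⟨B, hB, hb⟩ := happrox m
    exact (hmin B hB).trans hb
  have hLzero : L = 0 := by
    by_contra hne
    have hLpos : 0 < L := lt_of_le_of_ne hL0 (Ne.symm hne)
    obtain ⟨m, hm⟩ := exists_nat_gt (C / L)
    have h1 := hLle m
    have hmpos : (0:ℝ) < (m : ℝ) + 1 := by positivity
    rw [div_lt_iff₀ hLpos] at hm
    have h3 : C < ((m : ℝ) + 1) ^ 2 * L := by
      nlinarith [hm, hLpos,
        mul_nonneg (mul_nonneg (Nat.cast_nonneg (α := ℝ) m) (Nat.cast_nonneg (α := ℝ) m)) hL0,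
        mul_nonneg (Nat.cast_nonneg (α := ℝ) m) hL0]
    have h4 : ((m : ℝ) + 1)⁻¹ ^ 2 * C < ((m : ℝ) + 1)⁻¹ ^ 2 * (((m : ℝ) + 1) ^ 2 * L) :=
      mul_lt_mul_of_pos_left h3 (by positivity)
    have h5 : ((m : ℝ) + 1)⁻¹ ^ 2 * (((m : ℝ) + 1) ^ 2 * L) = L := by
      field_simp
    linarith
  -- hence A agrees with g on the embedded block
  have hAg : ∀ j : Fin q₁ × Fin q₂ × Fin q₃, g j = A (E j) := by
    have hkA := key A
    rw [← hLdef, hLzero] at hkA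
    have hn1 : (0:ℝ) ≤ ∑ j, (g j - A (E j)) ^ 2 := Finset.sum_nonneg fun j _ => sq_nonneg _
    have hn2 : (0:ℝ) ≤ ∑ i, (∑ k ∈ s2, Z i k * A k) ^ 2 :=
      Finset.sum_nonneg fun i _ => sq_nonneg _
    have hz : (∑ j, (g j - A (E j)) ^ 2) = 0 := by linarith
    intro j
    have h1 : ∀ j' ∈ Finset.univ, (0:ℝ) ≤ (g j' - A (E j')) ^ 2 := fun j' _ => sq_nonneg _
    have := (Finset.sum_eq_zero_iff_of_nonneg h1).1 hz j (Finset.mem_univ j)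
    have := pow_eq_zero_iff (n := 2) (by norm_num) |>.1 this
    linarith
  -- contradiction with the rank of A
  obtain ⟨a, b, c, hd⟩ := rank3_le_two_decomp hA2
  refine G_not_rank2 h₁ h₂ h₃
    (fun r i => a r (Fin.castLE hq₁.le i))
    (fun r i => b r (Fin.castLE hq₂.le i))
    (fun r i => c r (Fin.castLE hq₃.le i)) (fun j => ?_)
  calc (outer3 v₁ w₂ w₃ + outer3 w₁ v₂ w₃ + outer3 w₁ w₂ v₃) j = g j := by rw [hgdef]
    _ = A (E j) := hAg j
    _ = ∑ r, a r (Fin.castLE hq₁.le j.1) * b r (Fin.castLE hq₂.le j.2.1)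
          * c r (Fin.castLE hq₃.le j.2.2) := hd (E j)
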